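/- arXiv:1503.06640 — 2 statements merged into one kernel-verified Lean document; each statement's English description precedes it below -/
import Mathlib

section
/- (Cone Lemma II) Let Δ be a proper geometric simplicial complex in ℝ^d and let v be a vertex of Δ. Then for every integer k, the partial differential δ_v = ∂/∂x_v induces an isomorphism δ_v : S_{k+1}(St_v° Δ) → S_{k}(St_v Δ) from the relative stress space of the open star of v to the stress space of the star of v. -/
open MvPolynomial

open MvPolynomial

/-- An abstract simplicial complex on the vertex set `Fin n`:
a collection of finite subsets closed under taking subsets. -/
def IsComplex {n : ℕ} (Δ : Set (Finset (Fin n))) : Prop :=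
  ∀ σ ∈ Δ, ∀ τ ⊆ σ, τ ∈ Δ

/-- The vertex set `Δ^(0)` of a simplicial complex. -/
def verts {n : ℕ} (Δ : Set (Finset (Fin n))) : Set (Fin n) := {v | {v} ∈ Δ}

/-- The partial derivative `∂/∂xᵢ` as a linear endomorphism of `ℝ[x₁,…,xₙ]`. -/
noncomputable def pd {n : ℕ} (i : Fin n) : Module.End ℝ (MvPolynomial (Fin n) ℝ) :=
  (pderiv i).toLinearMap

/-- The constant coefficient differential operator `(x^a)^∨ = ∏ᵢ (∂/∂xᵢ)^(aᵢ)`. -/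
noncomputable def monDiff {n : ℕ} (a : Fin n →₀ ℕ) : Module.End ℝ (MvPolynomial (Fin n) ℝ) :=
  ((List.finRange n).map fun i => pd i ^ a i).prod

/-- The stress space `S̃(Δ)`: polynomials annihilated by `q^∨` for every `q` in the
nonface ideal `I_Δ` (equivalently, by `(x^a)^∨` for every monomial generator `x^a` of `I_Δ`). -/
noncomputable def tStress {n : ℕ} (Δ : Set (Finset (Fin n))) :
    Submodule ℝ (MvPolynomial (Fin n) ℝ) :=
  ⨅ a ∈ {a : Fin n →₀ ℕ | a.support ∉ Δ}, LinearMap.ker (monDiff a)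

/-- A linear differential `Σᵢ cᵢ ∂/∂xᵢ`. -/
noncomputable def linDiff {n : ℕ} (c : Fin n → ℝ) : Module.End ℝ (MvPolynomial (Fin n) ℝ) :=
  ∑ i, c i • pd i

/-- The canonical differential `δ = Σᵢ ∂/∂xᵢ`. -/
noncomputable def canDiff (n : ℕ) : Module.End ℝ (MvPolynomial (Fin n) ℝ) :=
  linDiff fun _ => (1 : ℝ)

/-- The coordinate differential `θⱼ = Σᵢ (vᵢ)ⱼ ∂/∂xᵢ` of a geometric simplicial complex. -/
noncomputable def coordDiff {n d : ℕ} (V : Fin n → Fin d → ℝ) (j : Fin d) :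
    Module.End ℝ (MvPolynomial (Fin n) ℝ) :=
  linDiff fun i => V i j

/-- The stress space `S(Δ)` of a geometric simplicial complex with vertex coordinates `V`. -/
noncomputable def stress {n d : ℕ} (V : Fin n → Fin d → ℝ) (Δ : Set (Finset (Fin n))) :
    Submodule ℝ (MvPolynomial (Fin n) ℝ) :=
  tStress Δ ⊓ ⨅ j : Fin d, LinearMap.ker (coordDiff V j)

/-- The degree-`k` graded piece `S_k(Δ)` of the stress space. -/
noncomputable def stressK {n d : ℕ} (V : Fin n → Fin d → ℝ) (Δ : Set (Finset (Fin n)))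
    (k : ℕ) : Submodule ℝ (MvPolynomial (Fin n) ℝ) :=
  stress V Δ ⊓ homogeneousSubmodule (Fin n) ℝ k

/-- A geometric simplicial complex in `ℝ^d` is proper if the coordinates of each face of
dimension `< d` are linearly independent. -/
def IsProper {n d : ℕ} (V : Fin n → Fin d → ℝ) (Δ : Set (Finset (Fin n))) : Prop :=
  ∀ σ ∈ Δ, σ.card ≤ d → LinearIndependent ℝ (fun i : {x // x ∈ σ} => V i.1)

/-- The star of a face. -/
def cStar {n : ℕ} (Δ : Set (Finset (Fin n))) (σ : Finset (Fin n)) : Set (Finset (Fin n)) :=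
  {τ ∈ Δ | σ ∪ τ ∈ Δ}

/-- The star of a vertex. -/
def vStar {n : ℕ} (Δ : Set (Finset (Fin n))) (v : Fin n) : Set (Finset (Fin n)) :=
  cStar Δ {v}

/-- The boundary `∂St_v Δ` of the star of a vertex: faces of the star not containing `v`. -/
def vStarBd {n : ℕ} (Δ : Set (Finset (Fin n))) (v : Fin n) : Set (Finset (Fin n)) :=
  {τ ∈ vStar Δ v | v ∉ τ}

/-- The link of a face. -/
def lk {n : ℕ} (Δ : Set (Finset (Fin n))) (σ : Finset (Fin n)) : Set (Finset (Fin n)) :=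
  {τ | Disjoint σ τ ∧ σ ∪ τ ∈ Δ}

/-- The vertex set `γ^(0)` of the support of a stress `γ`. -/
noncomputable def stressVerts {n : ℕ} (γ : MvPolynomial (Fin n) ℝ) : Finset (Fin n) :=
  γ.support.biUnion fun a => a.support

/-- `g_k = dim S_k − dim S_{k−1}` (with `S_{−1} = 0`). -/
noncomputable def gnum {n d : ℕ} (V : Fin n → Fin d → ℝ) (Δ : Set (Finset (Fin n)))
    (k : ℕ) : ℤ :=
  (Module.finrank ℝ ↥(stressK V Δ k) : ℤ) -
    if k = 0 then 0 else (Module.finrank ℝ ↥(stressK V Δ (k - 1)) : ℤ)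

/-- The homogenizing embedding `ℝ^d → ℝ^d × {1} ⊆ ℝ^{d+1}` applied to vertex coordinates. -/
noncomputable def homV {n d : ℕ} (p : Fin n → Fin d → ℝ) : Fin n → Fin (d + 1) → ℝ :=
  fun i => Fin.snoc (p i) 1

/-- `Δ` is the boundary complex of the simplicial `d`-polytope `conv{p 1, …, p n}`:
the polytope is full-dimensional, every `p i` is a vertex, the faces of `Δ` are exactly the
vertex sets cut out by supporting hyperplanes, and every proper face is a simplex. -/
def IsSimplicialPolytopeBoundary {n d : ℕ} (p : Fin n → Fin d → ℝ)
    (Δ : Set (Finset (Fin n))) : Prop :=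
  affineSpan ℝ (Set.range p) = ⊤ ∧
  (∀ i, p i ∉ convexHull ℝ (p '' {j | j ≠ i})) ∧
  (∀ σ ∈ Δ, AffineIndependent ℝ (fun i : {x // x ∈ σ} => p i.1)) ∧
  (∀ σ : Finset (Fin n), σ ∈ Δ ↔
    ∃ (f : (Fin d → ℝ) →ₗ[ℝ] ℝ) (c : ℝ),
      (∃ i, f (p i) < c) ∧ (∀ i, f (p i) ≤ c) ∧ (∀ i, f (p i) = c ↔ i ∈ σ))

/-- The simplicial boundary operator (with real coefficients), on the free module spanned by
all finite subsets of `Fin n`; the empty set plays the role of the `(−1)`-face, so that the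
associated homology is reduced. -/
noncomputable def bdry {n : ℕ} : (Finset (Fin n) →₀ ℝ) →ₗ[ℝ] (Finset (Fin n) →₀ ℝ) :=
  Finsupp.lsum ℝ fun σ => LinearMap.toSpanSingleton ℝ _
    (∑ i ∈ σ, ((-1 : ℝ) ^ (σ.filter (· < i)).card) • Finsupp.single (σ.erase i) (1 : ℝ))

/-- The space of simplicial `k`-chains of `Δ` (spanned by faces of `Δ` of dimension `k`). -/
noncomputable def chains {n : ℕ} (Δ : Set (Finset (Fin n))) (k : ℤ) :
    Submodule ℝ (Finset (Fin n) →₀ ℝ) :=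
  Finsupp.supported ℝ ℝ {σ | σ ∈ Δ ∧ (σ.card : ℤ) = k + 1}

/-- Reduced simplicial `k`-cycles of `Δ`. -/
noncomputable def cycles {n : ℕ} (Δ : Set (Finset (Fin n))) (k : ℤ) :
    Submodule ℝ (Finset (Fin n) →₀ ℝ) :=
  chains Δ k ⊓ LinearMap.ker bdry

/-- Simplicial `k`-boundaries of `Δ`. -/
noncomputable def bdries {n : ℕ} (Δ : Set (Finset (Fin n))) (k : ℤ) :
    Submodule ℝ (Finset (Fin n) →₀ ℝ) :=
  Submodule.map bdry (chains Δ (k + 1))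

/-- The reduced Betti number `β̃_k(Δ)` (with real coefficients). -/
noncomputable def rBetti {n : ℕ} (Δ : Set (Finset (Fin n))) (k : ℤ) : ℕ :=
  Module.finrank ℝ ↥(cycles Δ k) - Module.finrank ℝ ↥(bdries Δ k)

/-- The induced subcomplex `Δ_W` on a vertex set `W`. -/
def induced {n : ℕ} (Δ : Set (Finset (Fin n))) (W : Finset (Fin n)) : Set (Finset (Fin n)) :=
  {σ ∈ Δ | σ ⊆ W}

/-- The vertex set of the support of a simplicial chain. -/
def chainVerts {n : ℕ} (c : Finset (Fin n) →₀ ℝ) : Finset (Fin n) :=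
  c.support.biUnion id

/-- `Δ` is resolution `k`-chordal: every `k`-cycle `z` admits a resolution, i.e. a
`(k+1)`-chain `c` with `∂c = z` and `c^(0) = z^(0)`. -/
def ResolutionChordal {n : ℕ} (Δ : Set (Finset (Fin n))) (k : ℤ) : Prop :=
  ∀ z ∈ cycles Δ k, ∃ c ∈ chains Δ (k + 1), bdry c = z ∧ chainVerts c = chainVerts z

/-- `(Δ, ω)` is toric `k`-chordal: `ω : S_{k+1}(Δ) → S_k(Δ)` is surjective and
`ω : S_k(Δ) → S_{k−1}(Δ)` is injective. -/
def ToricChordal {n d : ℕ} (V : Fin n → Fin d → ℝ) (Δ : Set (Finset (Fin n)))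
    (ω : Module.End ℝ (MvPolynomial (Fin n) ℝ)) (k : ℕ) : Prop :=
  (∀ γ ∈ stressK V Δ k, ∃ γ' ∈ stressK V Δ (k + 1), ω γ' = γ) ∧
  (∀ γ ∈ stressK V Δ k, ω γ = 0 → γ = 0)

/-- `(Δ, ω)` is weakly toric `k`-chordal: `ω : S_k(St_v Δ) → S_{k−1}(St_v Δ)` is injective
for every vertex `v` of `Δ`. -/
def WeaklyToricChordal {n d : ℕ} (V : Fin n → Fin d → ℝ) (Δ : Set (Finset (Fin n)))
    (ω : Module.End ℝ (MvPolynomial (Fin n) ℝ)) (k : ℕ) : Prop :=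
  ∀ v ∈ verts Δ, ∀ γ ∈ stressK V (vStar Δ v) k, ω γ = 0 → γ = 0

/-- A missing face of `Δ`: a nonface all of whose proper subsets are faces. -/
def IsMissingFace {n : ℕ} (Δ : Set (Finset (Fin n))) (σ : Finset (Fin n)) : Prop :=
  σ ∉ Δ ∧ ∀ τ ⊂ σ, τ ∈ Δ

/-- Representatives of relative `k`-stresses of the relative complex `(Δ', Γ)`:
homogeneous degree-`k` elements of `S̃(Δ')` whose image under each coordinate differential
lies in `S̃(Γ)`.  The relative stress space `S_k(Δ', Γ)` is the quotient of this space by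
(the degree-`k` part of) `S̃(Γ)`. -/
noncomputable def relStressK {n d : ℕ} (V : Fin n → Fin d → ℝ)
    (Δ' Γ : Set (Finset (Fin n))) (k : ℕ) : Submodule ℝ (MvPolynomial (Fin n) ℝ) :=
  tStress Δ' ⊓ homogeneousSubmodule (Fin n) ℝ k ⊓
    ⨅ j : Fin d, (tStress Γ).comap (coordDiff V j)

/-- A shelling of a pure `(d−1)`-dimensional simplicial complex: a linear order on the facets
such that the intersection of each facet with the union of all subsequent facets is a pure
`(d−2)`-dimensional complex or empty. -/
def IsShelling {n : ℕ} (Δ : Set (Finset (Fin n))) (d : ℕ) (L : List (Finset (Fin n))) : Prop :=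
  L.Nodup ∧ (∀ σ, σ ∈ L ↔ σ ∈ Δ ∧ σ.card = d) ∧
  (∀ σ ∈ Δ, ∃ F ∈ L, σ ⊆ F) ∧
  ∀ (i : ℕ) (hi : i < L.length) (τ : Finset (Fin n)), τ ⊆ L.get ⟨i, hi⟩ →
    (∃ (j : ℕ) (hj : j < L.length), i < j ∧ τ ⊆ L.get ⟨j, hj⟩) →
    ∃ ρ, τ ⊆ ρ ∧ ρ ⊆ L.get ⟨i, hi⟩ ∧ ρ.card = d - 1 ∧
      ∃ (j : ℕ) (hj : j < L.length), i < j ∧ ρ ⊆ L.get ⟨j, hj⟩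

/-- The degree-`k` graded piece of the stress space `S̃(Δ)`. -/
noncomputable def tStressK {n : ℕ} (Δ : Set (Finset (Fin n))) (k : ℕ) :
    Submodule ℝ (MvPolynomial (Fin n) ℝ) :=
  tStress Δ ⊓ homogeneousSubmodule (Fin n) ℝ k

/-- A sequence `θ` of linear differentials is regular up to degree `k` on `S̃(Δ)`: each
`θ_j` maps the degree-`(i+1)` part of the common kernel of `θ_1, …, θ_{j−1}` in `S̃(Δ)` onto
the degree-`i` part, for every `i ≤ k`. -/
def RegularUpTo {n : ℕ} (Δ : Set (Finset (Fin n)))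
    (θ : List (Module.End ℝ (MvPolynomial (Fin n) ℝ))) (k : ℕ) : Prop :=
  ∀ j < θ.length, ∀ i ≤ k,
    ∀ γ ∈ tStressK Δ i ⊓ ⨅ l ∈ Finset.range j, LinearMap.ker (θ.getD l 0),
      ∃ γ' ∈ tStressK Δ (i + 1) ⊓ ⨅ l ∈ Finset.range j, LinearMap.ker (θ.getD l 0),
        θ.getD j 0 γ' = γ

/-- `dim Δ + 1`: the maximal cardinality of a face. -/
noncomputable def dim1 {n : ℕ} (Δ : Set (Finset (Fin n))) : ℕ :=
  sSup {m | ∃ σ ∈ Δ, σ.card = m}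

/-- `Δ` is Cohen–Macaulay over `ℝ`: the reduced homology of every face link vanishes below
the expected dimension. -/
def IsCM {n : ℕ} (Δ : Set (Finset (Fin n))) : Prop :=
  ∀ σ ∈ Δ, ∀ i : ℤ, i < (dim1 Δ : ℤ) - 1 - σ.card →
    cycles (lk Δ σ) i ≤ bdries (lk Δ σ) i

/-- `(q, T)` is a triangulation of the simplicial polytope `P = conv{p i}` whose faces contained
in the boundary `∂P` form exactly the boundary complex `Δ` of `P`. -/
def IsTriangulation {n d m : ℕ} (p : Fin n → Fin d → ℝ) (Δ : Set (Finset (Fin n)))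
    (q : Fin m → Fin d → ℝ) (T : Set (Finset (Fin m))) : Prop :=
  IsComplex T ∧
  (∀ σ ∈ T, AffineIndependent ℝ (fun i : {x // x ∈ σ} => q i.1)) ∧
  (∀ σ ∈ T, ∀ τ ∈ T,
    convexHull ℝ (q '' ↑σ) ∩ convexHull ℝ (q '' ↑τ) = convexHull ℝ (q '' ↑(σ ∩ τ))) ∧
  (⋃ σ ∈ T, convexHull ℝ (q '' ↑σ)) = convexHull ℝ (Set.range p) ∧
  {s : Set (Fin d → ℝ) | ∃ σ ∈ T,
      convexHull ℝ (q '' ↑σ) ⊆ frontier (convexHull ℝ (Set.range p)) ∧ s = q '' ↑σ}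
    = {s : Set (Fin d → ℝ) | ∃ σ ∈ Δ, s = p '' ↑σ}

/-- The restriction `Δ_S` of a balanced complex to the set `S` of colors. -/
def colorRestrict {n d : ℕ} (Δ : Set (Finset (Fin n))) (col : Fin n → Fin d)
    (S : Finset (Fin d)) : Set (Finset (Fin n)) :=
  {σ ∈ Δ | ∀ v ∈ σ, col v ∈ S}

section ConeLemmaHelpers

open Finsupp

variable {n : ℕ}

private lemma pd_apply (i : Fin n) (p : MvPolynomial (Fin n) ℝ) :
    pd i p = pderiv i p := rfl

private lemma supp_add_single (a : Fin n →₀ ℕ) (v : Fin n) :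
    (a + Finsupp.single v 1).support = a.support ∪ {v} := by
  ext i
  simp only [Finset.mem_union, Finset.mem_singleton, Finsupp.mem_support_iff,
    Finsupp.add_apply, Finsupp.single_apply]
  by_cases h : v = i
  · subst h; simp
  · simp [h, Ne.symm h]

private lemma pd_pow_monomial (i : Fin n) (k : ℕ) (m : Fin n →₀ ℕ) (c : ℝ) :
    (pd i ^ k) (monomial m c) =
      monomial (m - Finsupp.single i k) (c * ((m i).descFactorial k : ℝ)) := by
  induction k with
  | zero => simp
  | succ k ih =>
    rw [pow_succ', Module.End.mul_apply, ih, pd_apply, pderiv_monomial]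
    have h1 : m - Finsupp.single i k - Finsupp.single i 1
        = m - Finsupp.single i (k + 1) := by
      rw [tsub_tsub, ← Finsupp.single_add]
    have h2 : (m - Finsupp.single i k) i = m i - k := by
      simp [Finsupp.tsub_apply]
    rw [h1, h2, Nat.descFactorial_succ, Nat.cast_mul]
    ring

private lemma listsum_single_apply_eq_zero (b : Fin n →₀ ℕ) :
    ∀ (l : List (Fin n)) (i : Fin n), i ∉ l →
      ((l.map fun j => Finsupp.single j (b j)).sum) i = 0 := by
  intro l
  induction l with
  | nil => intro i _; rfl
  | cons j t ih =>
    intro i hi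
    simp only [List.mem_cons, not_or] at hi
    have hz : (Finsupp.single j (b j)) i = 0 :=
      Finsupp.single_eq_of_ne' (fun hh => hi.1 hh.symm)
    simp only [List.map_cons, List.sum_cons, Finsupp.add_apply, ih i hi.2, hz, add_zero]

private lemma prod_pd_monomial (b m : Fin n →₀ ℕ) (c : ℝ) :
    ∀ (l : List (Fin n)), l.Nodup →
      ((l.map fun i => pd i ^ b i).prod) (monomial m c) =
        monomial (m - (l.map fun i => Finsupp.single i (b i)).sum)
          (c * (l.map fun i => ((m i).descFactorial (b i) : ℝ)).prod) := by
  intro l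
  induction l with
  | nil => intro _; simp
  | cons i t ih =>
    intro hnd
    have hit : i ∉ t := (List.nodup_cons.mp hnd).1
    simp only [List.map_cons, List.prod_cons, List.sum_cons, Module.End.mul_apply,
      ih (List.nodup_cons.mp hnd).2, pd_pow_monomial]
    have h2 : (m - (t.map fun j => Finsupp.single j (b j)).sum) i = m i := by
      rw [Finsupp.tsub_apply, listsum_single_apply_eq_zero b t i hit, Nat.sub_zero]
    rw [h2, tsub_tsub, add_comm ((t.map fun i => Finsupp.single i (b i)).sum)
      (Finsupp.single i (b i))]
    congr 1
    ring

private lemma monDiff_monomial (b m : Fin n →₀ ℕ) (c : ℝ) :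
    monDiff b (monomial m c) =
      monomial (m - b) (c * ∏ i, ((m i).descFactorial (b i) : ℝ)) := by
  have h := prod_pd_monomial b m c (List.finRange n) (List.nodup_finRange n)
  rw [monDiff, h, Fin.prod_univ_def]
  congr 2
  rw [← Fin.sum_univ_def]
  ext j
  simp [Finsupp.finset_sum_apply, Finsupp.single_apply]

private lemma coeff_monDiff (b : Fin n →₀ ℕ) (p : MvPolynomial (Fin n) ℝ)
    (t : Fin n →₀ ℕ) :
    coeff t (monDiff b p) =
      coeff (t + b) p * ∏ i, (((t + b) i).descFactorial (b i) : ℝ) := by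
  conv_lhs => rw [p.as_sum]
  rw [map_sum, coeff_sum]
  simp only [monDiff_monomial, coeff_monomial]
  rw [Finset.sum_eq_single (t + b)]
  · rw [if_pos (add_tsub_cancel_right t b)]
  · intro m _ hne
    split_ifs with h
    · by_cases hbm : b ≤ m
      · exact absurd (by rw [← h, tsub_add_cancel_of_le hbm]) hne
      · have : ∃ i, m i < b i := by
          by_contra hno
          push_neg at hno
          exact hbm fun i => hno i
        obtain ⟨i, hi⟩ := this
        have hz : ((m i).descFactorial (b i) : ℝ) = 0 := by
          rw [Nat.descFactorial_eq_zero_iff_lt.mpr hi, Nat.cast_zero]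
        rw [Finset.prod_eq_zero (Finset.mem_univ i) hz, mul_zero]
    · rfl
  · intro h
    rw [MvPolynomial.notMem_support_iff.mp h, zero_mul, if_pos (add_tsub_cancel_right t b)]

private lemma pd_eq_monDiff (v : Fin n) :
    pd v = monDiff (Finsupp.single v 1) := by
  refine LinearMap.ext fun p => ?_
  conv_lhs => rw [p.as_sum]
  conv_rhs => rw [p.as_sum]
  rw [map_sum, map_sum]
  refine Finset.sum_congr rfl fun m _ => ?_
  rw [pd_apply, pderiv_monomial, monDiff_monomial]
  congr 1
  rw [Finset.prod_eq_single v (fun i _ hi => by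
    rw [Finsupp.single_eq_of_ne' (fun h => hi h.symm), Nat.descFactorial_zero, Nat.cast_one])
    (fun h => absurd (Finset.mem_univ v) h)]
  rw [Finsupp.single_eq_same, Nat.descFactorial_one]

private lemma coeff_pd (v : Fin n) (p : MvPolynomial (Fin n) ℝ) (t : Fin n →₀ ℕ) :
    coeff t (pd v p) = coeff (t + Finsupp.single v 1) p * ((t v : ℝ) + 1) := by
  rw [pd_eq_monDiff, coeff_monDiff]
  congr 1
  rw [Finset.prod_eq_single v (fun i _ hi => by
    rw [Finsupp.single_eq_of_ne' (fun h => hi h.symm), Nat.descFactorial_zero, Nat.cast_one])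
    (fun h => absurd (Finset.mem_univ v) h)]
  rw [Finsupp.single_eq_same, Nat.descFactorial_one, Finsupp.add_apply,
    Finsupp.single_eq_same, Nat.cast_add, Nat.cast_one]

private lemma mem_tStress_iff {Δ' : Set (Finset (Fin n))} {p : MvPolynomial (Fin n) ℝ} :
    p ∈ tStress Δ' ↔ ∀ b : Fin n →₀ ℕ, b.support ∉ Δ' → monDiff b p = 0 := by
  simp [tStress, Submodule.mem_iInf, LinearMap.mem_ker]

private lemma support_mem_of_mem_tStress {Δ' : Set (Finset (Fin n))}
    {p : MvPolynomial (Fin n) ℝ} (hp : p ∈ tStress Δ') {m : Fin n →₀ ℕ}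
    (hm : m ∈ p.support) : m.support ∈ Δ' := by
  by_contra h
  have h0 := mem_tStress_iff.mp hp m h
  have hcm := coeff_monDiff m p 0
  rw [h0, zero_add, MvPolynomial.coeff_zero] at hcm
  have hne : (∏ i, ((m i).descFactorial (m i) : ℝ)) ≠ 0 := by
    refine Finset.prod_ne_zero_iff.mpr fun i _ => ?_
    rw [Nat.descFactorial_self]
    exact_mod_cast (m i).factorial_ne_zero
  exact MvPolynomial.mem_support_iff.mp hm
    (by rcases mul_eq_zero.mp hcm.symm with h' | h'
        · exact h'
        · exact absurd h' hne)

private lemma tStress_of_forall_support {Δ' : Set (Finset (Fin n))}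
    (hc : ∀ σ ∈ Δ', ∀ τ ⊆ σ, τ ∈ Δ') {p : MvPolynomial (Fin n) ℝ}
    (h : ∀ m ∈ p.support, m.support ∈ Δ') : p ∈ tStress Δ' := by
  refine mem_tStress_iff.mpr fun b hb => ?_
  apply MvPolynomial.ext; intro t
  rw [coeff_monDiff, MvPolynomial.coeff_zero]
  rcases eq_or_ne (coeff (t + b) p) 0 with h0 | h0
  · rw [h0, zero_mul]
  · exact (hb (hc _ (h _ (MvPolynomial.mem_support_iff.mpr h0)) _
      (Finsupp.support_mono le_add_self))).elim

private lemma apply_eq_zero_of_pd_eq_zero {v : Fin n} {p : MvPolynomial (Fin n) ℝ}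
    (h : pd v p = 0) {m : Fin n →₀ ℕ} (hm : m ∈ p.support) : m v = 0 := by
  by_contra hmv
  have h1 : Finsupp.single v 1 ≤ m := Finsupp.single_le_iff.mpr (by omega)
  have hc := coeff_pd v p (m - Finsupp.single v 1)
  rw [h, tsub_add_cancel_of_le h1, MvPolynomial.coeff_zero] at hc
  have : coeff m p = 0 := by
    rcases mul_eq_zero.mp hc.symm with h' | h'
    · exact h'
    · exact absurd h' (by positivity)
  exact MvPolynomial.mem_support_iff.mp hm this

private lemma mem_homog_iff {k : ℕ} {p : MvPolynomial (Fin n) ℝ} :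
    p ∈ homogeneousSubmodule (Fin n) ℝ k ↔
      ∀ m ∈ p.support, Finsupp.degree m = k := by
  rw [homogeneousSubmodule_eq_finsupp_supported, AddMonoidAlgebra.mem_supported]
  constructor
  · intro h m hm
    exact h hm
  · intro h m hm
    exact h m hm

private lemma degree_add_single (a : Fin n →₀ ℕ) (v : Fin n) :
    Finsupp.degree (a + Finsupp.single v 1) = Finsupp.degree a + 1 := by
  simp [Finsupp.degree_eq_weight_one, map_add, Finsupp.weight_apply,
    Finsupp.sum_single_index]

private lemma pd_mem_homog {k : ℕ} {v : Fin n} {p : MvPolynomial (Fin n) ℝ}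
    (h : p ∈ homogeneousSubmodule (Fin n) ℝ (k + 1)) :
    pd v p ∈ homogeneousSubmodule (Fin n) ℝ k := by
  rw [mem_homog_iff] at h ⊢
  intro m hm
  have hc : coeff m (pd v p) ≠ 0 := MvPolynomial.mem_support_iff.mp hm
  rw [coeff_pd] at hc
  have h1 : coeff (m + Finsupp.single v 1) p ≠ 0 := fun h0 => hc (by rw [h0, zero_mul])
  have h2 := h _ (MvPolynomial.mem_support_iff.mpr h1)
  rw [degree_add_single] at h2
  omega

private lemma pd_mem_tStress {Δ' : Set (Finset (Fin n))}
    (hc : ∀ σ ∈ Δ', ∀ τ ⊆ σ, τ ∈ Δ') {p : MvPolynomial (Fin n) ℝ}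
    (hp : p ∈ tStress Δ') (i : Fin n) : pd i p ∈ tStress Δ' := by
  refine tStress_of_forall_support hc fun m hm => ?_
  have hcnz := MvPolynomial.mem_support_iff.mp hm
  rw [coeff_pd] at hcnz
  have h1 : coeff (m + Finsupp.single i 1) p ≠ 0 := fun h0 => hcnz (by rw [h0, zero_mul])
  exact hc _ (support_mem_of_mem_tStress hp (MvPolynomial.mem_support_iff.mpr h1)) _
    (Finsupp.support_mono le_self_add)

private lemma linDiff_apply (c : Fin n → ℝ) (p : MvPolynomial (Fin n) ℝ) :
    linDiff c p = ∑ i, c i • pd i p := by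
  simp [linDiff, LinearMap.sum_apply, LinearMap.smul_apply]

private lemma linDiff_mem_tStress {Δ' : Set (Finset (Fin n))}
    (hc : ∀ σ ∈ Δ', ∀ τ ⊆ σ, τ ∈ Δ') {p : MvPolynomial (Fin n) ℝ}
    (hp : p ∈ tStress Δ') (c : Fin n → ℝ) : linDiff c p ∈ tStress Δ' := by
  rw [linDiff_apply]
  exact Submodule.sum_mem _ fun i _ => Submodule.smul_mem _ _ (pd_mem_tStress hc hp i)

private lemma pd_pd_comm (v i : Fin n) (p : MvPolynomial (Fin n) ℝ) :
    pd v (pd i p) = pd i (pd v p) := by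
  apply MvPolynomial.ext; intro t
  rw [coeff_pd, coeff_pd, coeff_pd, coeff_pd]
  rcases eq_or_ne i v with rfl | hne
  · ring
  · have h1 : t + Finsupp.single v 1 + Finsupp.single i 1
        = t + Finsupp.single i 1 + Finsupp.single v 1 := by rw [add_right_comm]
    rw [h1, Finsupp.add_apply, Finsupp.add_apply,
      Finsupp.single_eq_of_ne hne, Finsupp.single_eq_of_ne (fun h => hne h.symm)]
    push_cast
    ring

private lemma pd_linDiff_comm (c : Fin n → ℝ) (v : Fin n) (p : MvPolynomial (Fin n) ℝ) :
    pd v (linDiff c p) = linDiff c (pd v p) := by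
  rw [linDiff_apply, linDiff_apply, map_sum]
  refine Finset.sum_congr rfl fun i _ => ?_
  rw [map_smul, pd_pd_comm]

variable {Δ : Set (Finset (Fin n))} {v : Fin n}

private lemma mem_vStar_iff {τ : Finset (Fin n)} :
    τ ∈ vStar Δ v ↔ τ ∈ Δ ∧ {v} ∪ τ ∈ Δ := Iff.rfl

private lemma mem_vStarBd_iff {τ : Finset (Fin n)} :
    τ ∈ vStarBd Δ v ↔ τ ∈ vStar Δ v ∧ v ∉ τ := Iff.rfl

private lemma vStar_isComplex (hΔ : IsComplex Δ) : IsComplex (vStar Δ v) := by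
  intro σ hσ τ hτ
  exact ⟨hΔ σ hσ.1 τ hτ, hΔ _ hσ.2 _ (Finset.union_subset_union_right hτ)⟩

private lemma vStarBd_isComplex (hΔ : IsComplex Δ) : IsComplex (vStarBd Δ v) := by
  intro σ hσ τ hτ
  exact ⟨vStar_isComplex hΔ σ hσ.1 τ hτ, fun h => hσ.2 (hτ h)⟩

private lemma cone_mem (hΔ : IsComplex Δ) {τ : Finset (Fin n)} (h : τ ∈ vStar Δ v) :
    τ ∪ {v} ∈ vStar Δ v := by
  have h2 : {v} ∪ (τ ∪ {v}) = {v} ∪ τ := by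
    rw [Finset.union_comm τ {v}, ← Finset.union_assoc, Finset.union_self]
  refine ⟨?_, by rw [h2]; exact h.2⟩
  rw [Finset.union_comm]
  exact h.2

private lemma singleton_not_mem_vStarBd : ({v} : Finset (Fin n)) ∉ vStarBd Δ v :=
  fun h => h.2 (Finset.mem_singleton_self v)

private lemma pd_of_mem_tStress_vStarBd {p : MvPolynomial (Fin n) ℝ}
    (hp : p ∈ tStress (vStarBd Δ v)) : pd v p = 0 := by
  rw [pd_eq_monDiff]
  refine mem_tStress_iff.mp hp _ ?_
  rw [Finsupp.support_single_ne_zero v one_ne_zero]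
  exact singleton_not_mem_vStarBd

private lemma mem_tStress_vStarBd (hΔ : IsComplex Δ) {p : MvPolynomial (Fin n) ℝ}
    (hp : p ∈ tStress (vStar Δ v)) (h0 : pd v p = 0) : p ∈ tStress (vStarBd Δ v) := by
  refine tStress_of_forall_support (vStarBd_isComplex hΔ) fun m hm => ?_
  refine ⟨support_mem_of_mem_tStress hp hm, ?_⟩
  simp [Finsupp.mem_support_iff, apply_eq_zero_of_pd_eq_zero h0 hm]

private lemma mem_stressK_iff {d : ℕ} {V : Fin n → Fin d → ℝ}
    {Δ' : Set (Finset (Fin n))} {k : ℕ} {p : MvPolynomial (Fin n) ℝ} :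
    p ∈ stressK V Δ' k ↔
      p ∈ tStress Δ' ∧ (∀ j, coordDiff V j p = 0) ∧
        p ∈ homogeneousSubmodule (Fin n) ℝ k := by
  simp [stressK, stress, Submodule.mem_inf, Submodule.mem_iInf, LinearMap.mem_ker, and_assoc]

private lemma mem_relStressK_iff {d : ℕ} {V : Fin n → Fin d → ℝ}
    {Δ' Γ : Set (Finset (Fin n))} {k : ℕ} {p : MvPolynomial (Fin n) ℝ} :
    p ∈ relStressK V Δ' Γ k ↔
      p ∈ tStress Δ' ∧ p ∈ homogeneousSubmodule (Fin n) ℝ k ∧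
        ∀ j, coordDiff V j p ∈ tStress Γ := by
  simp [relStressK, Submodule.mem_inf, Submodule.mem_iInf, Submodule.mem_comap, and_assoc]

end ConeLemmaHelpers

theorem stmt3 {n d : ℕ} (V : Fin n → Fin d → ℝ) (Δ : Set (Finset (Fin n)))
    (hΔ : IsComplex Δ) (hp : IsProper V Δ) (v : Fin n) (hv : v ∈ verts Δ) (k : ℕ) :
    (∀ γ ∈ relStressK V (vStar Δ v) (vStarBd Δ v) (k + 1),
        pd v γ ∈ stressK V (vStar Δ v) k) ∧
    (∀ γ ∈ relStressK V (vStar Δ v) (vStarBd Δ v) (k + 1),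
        pd v γ = 0 → γ ∈ tStress (vStarBd Δ v)) ∧
    (∀ s ∈ stressK V (vStar Δ v) k,
        ∃ γ ∈ relStressK V (vStar Δ v) (vStarBd Δ v) (k + 1), pd v γ = s) := by
  have hSt : IsComplex (vStar Δ v) := vStar_isComplex hΔ
  refine ⟨?_, ?_, ?_⟩
  · intro γ hγ
    obtain ⟨h1, h2, h3⟩ := mem_relStressK_iff.mp hγ
    refine mem_stressK_iff.mpr ⟨pd_mem_tStress hSt h1 v, fun j => ?_, pd_mem_homog h2⟩
    have hcomm : pd v (coordDiff V j γ) = coordDiff V j (pd v γ) :=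
      pd_linDiff_comm (fun i => V i j) v γ
    rw [← hcomm]
    exact pd_of_mem_tStress_vStarBd (h3 j)
  · intro γ hγ h0
    exact mem_tStress_vStarBd hΔ (mem_relStressK_iff.mp hγ).1 h0
  · intro s hs
    obtain ⟨h1, h2, h3⟩ := mem_stressK_iff.mp hs
    set γ : MvPolynomial (Fin n) ℝ :=
      ∑ m ∈ s.support, monomial (m + Finsupp.single v 1) (coeff m s / (m v + 1))
      with hγdef
    have hsupp : ∀ m' ∈ γ.support, ∃ m ∈ s.support, m' = m + Finsupp.single v 1 := by
      intro m' hm'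
      have hc := MvPolynomial.mem_support_iff.mp hm'
      rw [hγdef, coeff_sum] at hc
      obtain ⟨m, hm, hne⟩ := Finset.exists_ne_zero_of_sum_ne_zero hc
      rcases eq_or_ne (m + Finsupp.single v 1) m' with h | h
      · exact ⟨m, hm, h.symm⟩
      · rw [coeff_monomial, if_neg h] at hne
        exact absurd rfl hne
    have hpd : pd v γ = s := by
      rw [hγdef, map_sum]
      conv_rhs => rw [s.as_sum]
      refine Finset.sum_congr rfl fun m hm => ?_
      rw [pd_apply, pderiv_monomial, add_tsub_cancel_right]
      have hmv : (m + Finsupp.single v 1 : Fin n →₀ ℕ) v = m v + 1 := by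
        rw [Finsupp.add_apply, Finsupp.single_eq_same]
      rw [hmv]
      congr 1
      push_cast
      rw [div_mul_cancel₀]
      positivity
    have hγSt : γ ∈ tStress (vStar Δ v) := by
      refine tStress_of_forall_support hSt fun m' hm' => ?_
      obtain ⟨m, hm, rfl⟩ := hsupp m' hm'
      rw [supp_add_single]
      exact cone_mem hΔ (support_mem_of_mem_tStress h1 hm)
    refine ⟨γ, mem_relStressK_iff.mpr ⟨hγSt, ?_, fun j => ?_⟩, hpd⟩
    · rw [mem_homog_iff] at h3 ⊢
      intro m' hm'
      obtain ⟨m, hm, rfl⟩ := hsupp m' hm'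
      rw [degree_add_single, h3 m hm]
    · refine mem_tStress_vStarBd hΔ (linDiff_mem_tStress hSt hγSt _) ?_
      have hcomm : pd v (coordDiff V j γ) = coordDiff V j (pd v γ) :=
        pd_linDiff_comm (fun i => V i j) v γ
      rw [hcomm, hpd]
      exact h2 j
end

section
/- Weak toric chordality propagates: if Δ is a geometric simplicial complex and ω a linear differential such that (Δ,ω) is weakly toric k-chordal for some k ≥ 0, then (Δ,ω) is weakly toric ℓ-chordal for every ℓ ≥ k. -/
open MvPolynomial

open MvPolynomial

lemma coeff_pderiv' {n : ℕ} (i : Fin n) (p : MvPolynomial (Fin n) ℝ) (m : Fin n →₀ ℕ) :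
    coeff m (pderiv i p) = ((m i : ℝ) + 1) * coeff (m + Finsupp.single i 1) p := by
  induction p using MvPolynomial.induction_on' with
  | monomial s a =>
    rw [pderiv_monomial, coeff_monomial, coeff_monomial]
    by_cases h : s = m + Finsupp.single i 1
    · subst h
      rw [if_pos (add_tsub_cancel_right _ _), if_pos rfl]
      simp [Finsupp.add_apply, Finsupp.single_apply]
      ring
    · rw [if_neg h]
      rcases eq_or_ne (s i) 0 with hs | hs
      · split_ifs <;> simp [hs]
      · rw [if_neg, mul_zero]
        intro h2
        apply h
        rw [← h2, tsub_add_cancel_of_le]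
        rwa [Finsupp.single_le_iff, Nat.one_le_iff_ne_zero]
  | add p q hp hq =>
    simp only [map_add, coeff_add, hp, hq]
    ring

lemma pderiv_comm' {n : ℕ} (i j : Fin n) (p : MvPolynomial (Fin n) ℝ) :
    pderiv i (pderiv j p) = pderiv j (pderiv i p) := by
  apply MvPolynomial.ext
  intro m
  rw [coeff_pderiv', coeff_pderiv', coeff_pderiv', coeff_pderiv',
    add_right_comm m (Finsupp.single j 1)]
  by_cases h : i = j
  · subst h; ring
  · simp only [Finsupp.add_apply, Finsupp.single_apply, h, Ne.symm h, if_neg, if_false,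
      add_zero, Nat.cast_add]
    ring

lemma pd_comm {n : ℕ} (i j : Fin n) : Commute (pd i) (pd j) :=
  LinearMap.ext fun p => pderiv_comm' i j p

lemma pd_monDiff_comm {n : ℕ} (i : Fin n) (a : Fin n →₀ ℕ) :
    Commute (pd i) (monDiff a) := by
  unfold monDiff
  apply Commute.list_prod_right
  intro x hx
  simp only [List.mem_map] at hx
  obtain ⟨j, -, rfl⟩ := hx
  exact (pd_comm i j).pow_right _

lemma pd_linDiff_comm_s5 {n : ℕ} (i : Fin n) (c : Fin n → ℝ) :
    Commute (pd i) (linDiff c) := by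
  unfold linDiff
  exact Commute.sum_right _ _ _ fun j _ => (pd_comm i j).smul_right _

lemma pd_tStress {n : ℕ} {Δ' : Set (Finset (Fin n))} {γ : MvPolynomial (Fin n) ℝ}
    (hγ : γ ∈ tStress Δ') (i : Fin n) : pd i γ ∈ tStress Δ' := by
  simp only [tStress, Submodule.mem_iInf, LinearMap.mem_ker] at hγ ⊢
  intro a ha
  have h1 : (monDiff a * pd i) γ = (pd i * monDiff a) γ := by
    rw [(pd_monDiff_comm i a).eq]
  rw [Module.End.mul_apply, Module.End.mul_apply] at h1
  rw [h1, hγ a ha, map_zero]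

lemma pd_homog {n : ℕ} {γ : MvPolynomial (Fin n) ℝ} {k : ℕ}
    (hγ : γ ∈ homogeneousSubmodule (Fin n) ℝ (k + 1)) (i : Fin n) :
    pd i γ ∈ homogeneousSubmodule (Fin n) ℝ k := by
  rw [mem_homogeneousSubmodule] at hγ ⊢
  intro d hd
  have hne : coeff (d + Finsupp.single i 1) γ ≠ 0 := by
    intro h0
    apply hd
    show coeff d (pderiv i γ) = 0
    rw [coeff_pderiv', h0, mul_zero]
  have h1 := hγ hne
  have h2 : (Finsupp.weight 1) (d + Finsupp.single i 1) =
      (Finsupp.weight 1) d + 1 := by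
    rw [map_add]
    congr 1
    rw [Finsupp.weight_apply, Finsupp.sum_single_index] <;> simp
  rw [h2] at h1
  show (Finsupp.weight 1) d = k
  omega

lemma homog_pd_zero {n k : ℕ} {γ : MvPolynomial (Fin n) ℝ}
    (hγ : γ ∈ homogeneousSubmodule (Fin n) ℝ (k + 1))
    (h : ∀ i, pd i γ = 0) : γ = 0 := by
  rw [mem_homogeneousSubmodule] at hγ
  apply MvPolynomial.ext
  intro d
  rw [coeff_zero]
  by_contra hne
  have hdeg : (Finsupp.weight 1) d = k + 1 := hγ hne
  have hd0 : d ≠ 0 := by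
    intro h0
    rw [h0, map_zero] at hdeg
    omega
  obtain ⟨i, hi⟩ := Finsupp.support_nonempty_iff.mpr hd0
  have hile : Finsupp.single i 1 ≤ d := by
    rw [Finsupp.single_le_iff, Nat.one_le_iff_ne_zero]
    exact Finsupp.mem_support_iff.mp hi
  set m : Fin n →₀ ℕ := d - Finsupp.single i 1 with hm
  have hco := coeff_pderiv' i γ m
  rw [hm, tsub_add_cancel_of_le hile] at hco
  have hz : pderiv i γ = 0 := h i
  rw [hz, coeff_zero] at hco
  have hpos : ((m i : ℝ) + 1) ≠ 0 := by positivity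
  exact hne ((mul_eq_zero.mp hco.symm).resolve_left hpos)

lemma pd_stressK {n d : ℕ} {V : Fin n → Fin d → ℝ} {Δ' : Set (Finset (Fin n))}
    {γ : MvPolynomial (Fin n) ℝ} {k : ℕ} (hγ : γ ∈ stressK V Δ' (k + 1)) (i : Fin n) :
    pd i γ ∈ stressK V Δ' k := by
  rw [stressK, Submodule.mem_inf] at hγ ⊢
  rw [stress, Submodule.mem_inf] at hγ ⊢
  obtain ⟨⟨h1, h2⟩, h3⟩ := hγ
  refine ⟨⟨pd_tStress h1 i, ?_⟩, pd_homog h3 i⟩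
  rw [Submodule.mem_iInf] at h2 ⊢
  intro j
  rw [LinearMap.mem_ker]
  have hc : (coordDiff V j * pd i) γ = (pd i * coordDiff V j) γ := by
    rw [coordDiff, ← (pd_linDiff_comm_s5 i fun l => V l j).eq]
  rw [Module.End.mul_apply, Module.End.mul_apply] at hc
  rw [hc, LinearMap.mem_ker.mp (h2 j), map_zero]

lemma wtc_succ {n d : ℕ} {V : Fin n → Fin d → ℝ} {Δ : Set (Finset (Fin n))}
    {c : Fin n → ℝ} {k : ℕ} (h : WeaklyToricChordal V Δ (linDiff c) k) :
    WeaklyToricChordal V Δ (linDiff c) (k + 1) := by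
  intro v hv γ hγ hω
  rw [stressK, Submodule.mem_inf] at hγ
  apply homog_pd_zero hγ.2
  intro i
  have hcomm : (linDiff c * pd i) γ = (pd i * linDiff c) γ := by
    rw [← (pd_linDiff_comm_s5 i c).eq]
  rw [Module.End.mul_apply, Module.End.mul_apply] at hcomm
  apply h v hv (pd i γ) (pd_stressK hγ i)
  rw [hcomm, hω, map_zero]

theorem stmt5 {n d : ℕ} (V : Fin n → Fin d → ℝ) (Δ : Set (Finset (Fin n)))
    (hΔ : IsComplex Δ) (c : Fin n → ℝ) (k : ℕ)
    (h : WeaklyToricChordal V Δ (linDiff c) k) :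
    ∀ ℓ : ℕ, k ≤ ℓ → WeaklyToricChordal V Δ (linDiff c) ℓ := by
  intro ℓ hℓ
  induction ℓ, hℓ using Nat.le_induction with
  | base => exact h
  | succ m hm ih => exact wtc_succ ih
end
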